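/- For α ∈ (0,1], λ ∈ ℝ, and t ≥ 0, the function u(t) = E_{α,1}(λ t^α) satisfies the Volterra integral equation u(t) = 1 + (λ/Γ(α)) ∫_0^t (t−s)^{α−1} u(s) ds. -/

import Mathlib

open Real MeasureTheory intervalIntegral

lemma gamma_lb {α s : ℝ} (hα : 0 < α) (hα1 : α ≤ 1) (hs : 1 ≤ s) :
    Real.Gamma s ≤ Real.Gamma (s + α) * (s + α - 1) ^ (-α) := by
  set x : ℝ := s + α - 1 with hx
  have hx0 : 0 < x := by simp only [hx]; linarith
  have hs0 : 0 < s := by linarith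
  have hy0 : 0 < x + 1 := by linarith
  have hΓx : 0 < Real.Gamma x := Real.Gamma_pos_of_pos hx0
  have hΓy : 0 < Real.Gamma (x + 1) := Real.Gamma_pos_of_pos hy0
  have hΓs : 0 < Real.Gamma s := Real.Gamma_pos_of_pos hs0
  have hconv := Real.convexOn_log_Gamma.2 (Set.mem_Ioi.mpr hx0) (Set.mem_Ioi.mpr hy0)
    hα.le (by linarith : (0:ℝ) ≤ 1 - α) (by ring)
  have hcomb : α • x + (1 - α) • (x + 1) = s := by simp [hx]; ring
  rw [hcomb] at hconv
  simp only [Function.comp, smul_eq_mul] at hconv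
  -- Γ(x+1) = x Γ x
  have hrec : Real.Gamma (x + 1) = x * Real.Gamma x := Real.Gamma_add_one hx0.ne'
  have hlogx : Real.log (Real.Gamma x) = Real.log (Real.Gamma (x + 1)) - Real.log x := by
    rw [hrec, Real.log_mul hx0.ne' hΓx.ne']; ring
  rw [hlogx] at hconv
  have h2 : Real.log (Real.Gamma s) ≤ Real.log (Real.Gamma (x + 1)) - α * Real.log x := by
    nlinarith [hconv]
  have := Real.exp_le_exp.mpr h2
  rw [Real.exp_log hΓs, Real.exp_sub, Real.exp_log hΓy] at this
  have hxp : x ^ (-α) = Real.exp (-(α * Real.log x)) := by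
    rw [Real.rpow_def_of_pos hx0]; ring_nf
  have hsy : s + α = x + 1 := by simp [hx]
  rw [hsy, hxp]
  calc Real.Gamma s ≤ Real.Gamma (x+1) / Real.exp (α * Real.log x) := this
    _ = Real.Gamma (x+1) * Real.exp (-(α * Real.log x)) := by
        rw [Real.exp_neg]; ring

lemma summable_ml {α β : ℝ} (hα : 0 < α) (hα1 : α ≤ 1) (hβ : 1 ≤ β) (x : ℝ) :
    Summable (fun k : ℕ => x ^ k / Real.Gamma (β + α * k)) := by
  apply summable_of_ratio_norm_eventually_le (r := 1/2) (by norm_num)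
  have h1 : Filter.Tendsto (fun k : ℕ => α * (k:ℝ) + (β + α - 1)) Filter.atTop Filter.atTop :=
    Filter.tendsto_atTop_add_const_right _ _
      (Filter.Tendsto.const_mul_atTop hα tendsto_natCast_atTop_atTop)
  have htend : Filter.Tendsto (fun k : ℕ => (α * (k:ℝ) + (β + α - 1)) ^ α)
      Filter.atTop Filter.atTop := (tendsto_rpow_atTop hα).comp h1
  filter_upwards [htend.eventually_ge_atTop (2 * |x|)] with k hk
  set s : ℝ := β + α * k with hsdef
  have hs1 : (1:ℝ) ≤ s := by
    have : (0:ℝ) ≤ α * k := by positivity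
    simp only [hsdef]; linarith
  have hx0 : (0:ℝ) < s + α - 1 := by linarith
  have hΓs : 0 < Real.Gamma s := Real.Gamma_pos_of_pos (by linarith)
  have hΓsa : 0 < Real.Gamma (s + α) := Real.Gamma_pos_of_pos (by linarith)
  have hp : 0 < (s + α - 1) ^ α := Real.rpow_pos_of_pos hx0 _
  have key : Real.Gamma s * (s + α - 1) ^ α ≤ Real.Gamma (s + α) := by
    have := gamma_lb hα hα1 hs1
    rw [Real.rpow_neg hx0.le] at this
    calc Real.Gamma s * (s + α - 1) ^ α
        ≤ (Real.Gamma (s + α) * ((s + α - 1) ^ α)⁻¹) * (s + α - 1) ^ α :=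
          mul_le_mul_of_nonneg_right this hp.le
      _ = Real.Gamma (s + α) := by field_simp
  have hkk : (α * (k:ℝ) + (β + α - 1)) = s + α - 1 := by simp only [hsdef]; ring
  rw [hkk] at hk
  have hsa : β + α * ((k:ℕ) + 1 : ℕ) = s + α := by push_cast; simp only [hsdef]; ring
  rw [Real.norm_eq_abs, Real.norm_eq_abs, abs_div, abs_div, abs_pow, abs_pow, hsa,
    abs_of_pos hΓsa, abs_of_pos hΓs]
  have hxabs : |x| ≤ (s + α - 1) ^ α / 2 := by linarith
  calc |x| ^ (k+1) / Real.Gamma (s + α)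
      ≤ |x| ^ (k+1) / (Real.Gamma s * (s + α - 1) ^ α) := by
        apply div_le_div_of_nonneg_left (by positivity) (by positivity) key
    _ = (|x| / (s + α - 1) ^ α) * (|x| ^ k / Real.Gamma s) := by
        rw [pow_succ]; field_simp
    _ ≤ (1/2) * (|x| ^ k / Real.Gamma s) := by
        apply mul_le_mul_of_nonneg_right _ (by positivity)
        rw [div_le_iff₀ hp]
        calc |x| ≤ (s + α - 1) ^ α / 2 := hxabs
          _ = 1/2 * (s+α-1)^α := by ring

lemma beta_eval {a b t : ℝ} (ha : 0 < a) (hb : 0 < b) (ht : 0 < t) :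
    ∫ s in (0:ℝ)..t, s ^ (b - 1) * (t - s) ^ (a - 1)
      = t ^ (a + b - 1) * (Real.Gamma a * Real.Gamma b / Real.Gamma (a + b)) := by
  have hC : (∫ s in (0:ℝ)..t, (s:ℂ) ^ ((b:ℂ) - 1) * ((t:ℂ) - s) ^ ((a:ℂ) - 1))
      = (t:ℂ) ^ ((b:ℂ) + a - 1) * Complex.betaIntegral b a :=
    Complex.betaIntegral_scaled b a ht
  have hB : Complex.betaIntegral b a = (Real.Gamma a * Real.Gamma b / Real.Gamma (a+b) : ℝ) := by
    have h1 := Complex.Gamma_mul_Gamma_eq_betaIntegral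
      (s := (b:ℂ)) (t := (a:ℂ)) (by simpa using hb) (by simpa using ha)
    have hne : Complex.Gamma ((b:ℂ) + a) ≠ 0 := by
      rw [show ((b:ℂ) + a) = ((b + a : ℝ) : ℂ) by push_cast; ring, Complex.Gamma_ofReal]
      exact_mod_cast (Real.Gamma_pos_of_pos (by linarith)).ne'
    have : Complex.betaIntegral b a = Complex.Gamma b * Complex.Gamma a /
        Complex.Gamma ((b:ℂ) + a) := by
      field_simp at h1 ⊢
      rw [h1]
    rw [this, show ((b:ℂ) + a) = ((b + a : ℝ) : ℂ) by push_cast; ring,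
      Complex.Gamma_ofReal, Complex.Gamma_ofReal, Complex.Gamma_ofReal]
    push_cast
    rw [show b + a = a + b by ring]
    ring
  have hL : (∫ s in (0:ℝ)..t, (s:ℂ) ^ ((b:ℂ) - 1) * ((t:ℂ) - s) ^ ((a:ℂ) - 1))
      = ((∫ s in (0:ℝ)..t, s ^ (b - 1) * (t - s) ^ (a - 1) : ℝ) : ℂ) := by
    rw [← intervalIntegral.integral_ofReal]
    apply intervalIntegral.integral_congr
    intro s hs
    rw [Set.uIcc_of_le ht.le] at hs
    obtain ⟨hs0, hst⟩ := hs
    push_cast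
    rw [Complex.ofReal_cpow hs0, Complex.ofReal_cpow (by linarith : (0:ℝ) ≤ t - s)]
    push_cast
    ring
  have hR : ((t:ℂ) ^ ((b:ℂ) + a - 1)) = ((t ^ (a + b - 1) : ℝ) : ℂ) := by
    rw [Complex.ofReal_cpow ht.le]
    push_cast
    rw [show (b:ℂ) + a - 1 = a + b - 1 by ring]
  rw [hL, hR, hB] at hC
  exact_mod_cast hC

/-- Real two-parameter Mittag-Leffler function `E_{α,β}`. -/
noncomputable def mittagLefflerR (α β w : ℝ) : ℝ :=
  ∑' k : ℕ, w ^ k / Real.Gamma (β + α * k)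

theorem mittagLeffler_volterra (α l : ℝ) (hα : α ∈ Set.Ioc (0 : ℝ) 1) :
    ∀ t : ℝ, 0 ≤ t →
      mittagLefflerR α 1 (l * t ^ α)
        = 1 + (l / Real.Gamma α) *
            ∫ s in (0 : ℝ)..t, (t - s) ^ (α - 1) * mittagLefflerR α 1 (l * s ^ α) := by
  obtain ⟨hα0, hα1⟩ := hα
  have hΓα : 0 < Real.Gamma α := Real.Gamma_pos_of_pos hα0
  have hEs : ∀ s : ℝ, 0 ≤ s → mittagLefflerR α 1 (l * s ^ α)
      = ∑' k : ℕ, l ^ k * s ^ (α * k) / Real.Gamma (1 + α * k) := by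
    intro s hs
    unfold mittagLefflerR
    apply tsum_congr
    intro k
    rw [mul_pow, ← Real.rpow_natCast (s ^ α) k, ← Real.rpow_mul hs]
  intro t ht
  rcases ht.eq_or_lt with rfl | ht0
  · rw [intervalIntegral.integral_same, mul_zero, add_zero,
      Real.zero_rpow hα0.ne', mul_zero]
    unfold mittagLefflerR
    rw [tsum_eq_single 0 (by intro k hk; simp [zero_pow hk])]
    simp [Real.Gamma_one]
  -- now 0 < t
  set F : ℕ → ℝ → ℝ :=
    fun k s => l ^ k / Real.Gamma (1 + α * k) * (s ^ (α * k) * (t - s) ^ (α - 1)) with hF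
  have hΓ1k : ∀ k : ℕ, 0 < Real.Gamma (1 + α * k) := by
    intro k
    apply Real.Gamma_pos_of_pos
    have : (0:ℝ) ≤ α * k := by positivity
    linarith
  have hpt : ∀ s ∈ Set.Ioc (0:ℝ) t,
      (t - s) ^ (α - 1) * mittagLefflerR α 1 (l * s ^ α) = ∑' k : ℕ, F k s := by
    intro s hs
    rw [hEs s hs.1.le, ← tsum_mul_left]
    apply tsum_congr
    intro k
    simp only [hF]
    ring
  have hbase : IntervalIntegrable (fun s => (t - s) ^ (α - 1)) volume 0 t := by
    have h := intervalIntegrable_rpow' (a := t) (b := 0) (by linarith : (-1:ℝ) < α - 1)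
    simpa using h.comp_sub_left t
  have hFint : ∀ k : ℕ, Integrable (F k) (volume.restrict (Set.Ioc 0 t)) := by
    intro k
    apply Integrable.const_mul
    apply Integrable.bdd_mul (c := t ^ (α * (k:ℝ))) hbase.1
      ((Real.continuous_rpow_const (by positivity)).aestronglyMeasurable)
    rw [ae_restrict_iff' measurableSet_Ioc]
    filter_upwards with s hs
    rw [Real.norm_eq_abs, abs_of_nonneg (Real.rpow_nonneg hs.1.le _)]
    exact Real.rpow_le_rpow hs.1.le hs.2 (by positivity)
  have hbeta : ∀ c : ℝ, 0 ≤ c →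
      ∫ s in Set.Ioc (0:ℝ) t, s ^ c * (t - s) ^ (α - 1)
        = t ^ (α + c) * (Real.Gamma α * Real.Gamma (c+1) / Real.Gamma (α + (c+1))) := by
    intro c hc
    have h3 := beta_eval hα0 (show (0:ℝ) < c + 1 by linarith) ht0
    rw [intervalIntegral.integral_of_le ht0.le] at h3
    simpa [add_sub_cancel_right, show α + (c+1) - 1 = α + c by ring] using h3
  have hFval : ∀ k : ℕ, ∫ s in Set.Ioc (0:ℝ) t, F k s
      = l ^ k / Real.Gamma (1 + α * k) *
        (t ^ (α + α * k) * (Real.Gamma α * Real.Gamma (α*k+1) / Real.Gamma (α + (α*k+1)))) := by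
    intro k
    simp only [hF]
    rw [MeasureTheory.integral_const_mul, hbeta (α * k) (by positivity)]
  have hnorm : ∀ k : ℕ, ∫ s in Set.Ioc (0:ℝ) t, ‖F k s‖
      = |l| ^ k / Real.Gamma (1 + α * k) *
        (t ^ (α + α * k) * (Real.Gamma α * Real.Gamma (α*k+1) / Real.Gamma (α + (α*k+1)))) := by
    intro k
    have heq : ∀ s ∈ Set.Ioc (0:ℝ) t,
        ‖F k s‖ = |l| ^ k / Real.Gamma (1 + α * k) * (s ^ (α * k) * (t - s) ^ (α - 1)) := by
      intro s hs
      simp only [hF]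
      rw [Real.norm_eq_abs, abs_mul, abs_div, abs_pow,
        abs_of_pos (hΓ1k k), abs_mul,
        abs_of_nonneg (Real.rpow_nonneg hs.1.le _),
        abs_of_nonneg (Real.rpow_nonneg (by linarith [hs.2] : (0:ℝ) ≤ t - s) _)]
    rw [MeasureTheory.setIntegral_congr_fun measurableSet_Ioc heq,
      MeasureTheory.integral_const_mul, hbeta (α * k) (by positivity)]
  have hsum : Summable (fun k : ℕ => ∫ s in Set.Ioc (0:ℝ) t, ‖F k s‖) := by
    have base := (summable_ml hα0 hα1 (show (1:ℝ) ≤ α + 1 by linarith)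
      (|l| * t ^ α)).mul_left (Real.Gamma α * t ^ α)
    apply Summable.congr base
    intro k
    rw [hnorm k]
    have hT : t ^ (α + α * (k:ℝ)) = t ^ α * t ^ (α * (k:ℝ)) := Real.rpow_add ht0 _ _
    have hTk : (t ^ α) ^ k = t ^ (α * (k:ℝ)) := by
      rw [← Real.rpow_natCast (t ^ α) k, ← Real.rpow_mul ht0.le]
    have harg : (α + 1) + α * (k:ℝ) = α + (α * k + 1) := by ring
    have harg2 : α * (k:ℝ) + 1 = 1 + α * k := by ring
    rw [mul_pow, hTk, harg, harg2, hT]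
    have h1 := (hΓ1k k).ne'
    have h2 : Real.Gamma (α + (1 + α * (k:ℝ))) ≠ 0 := by
      apply (Real.Gamma_pos_of_pos _).ne'
      have : (0:ℝ) ≤ α * k := by positivity
      linarith
    field_simp
  have hinter := MeasureTheory.integral_tsum_of_summable_integral_norm hFint hsum
  rw [intervalIntegral.integral_of_le ht0.le,
    MeasureTheory.setIntegral_congr_fun measurableSet_Ioc hpt, ← hinter]
  -- now RHS is 1 + (l/Γα) * ∑' k, ∫ F k
  have hLHS : mittagLefflerR α 1 (l * t ^ α)
      = 1 + ∑' k : ℕ, (l * t ^ α) ^ (k+1) / Real.Gamma (1 + α * (k+1:ℕ)) := by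
    unfold mittagLefflerR
    rw [Summable.tsum_eq_zero_add (summable_ml hα0 hα1 le_rfl (l * t ^ α))]
    simp [Real.Gamma_one]
  rw [hLHS, ← tsum_mul_left]
  congr 1
  apply tsum_congr
  intro k
  rw [hFval k]
  have hT : t ^ (α + α * (k:ℝ)) = (t ^ α) ^ (k+1) := by
    rw [← Real.rpow_natCast (t ^ α) (k+1), ← Real.rpow_mul ht0.le]
    congr 1
    push_cast
    ring
  have harg : α + (α * (k:ℝ) + 1) = 1 + α * ((k:ℕ)+1:ℕ) := by push_cast; ring
  have harg2 : α * (k:ℝ) + 1 = 1 + α * k := by ring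
  rw [mul_pow, hT, harg, harg2]
  have h1 := (hΓ1k k).ne'
  have h2 : Real.Gamma (1 + α * ((k:ℕ)+1:ℕ)) ≠ 0 := by
    apply (Real.Gamma_pos_of_pos _).ne'
    have : (0:ℝ) ≤ α * ((k:ℕ)+1:ℕ) := by positivity
    linarith
  field_simp
  ring
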